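/- For each i = 0, 1, 2 one has ker ρᵢ ≤ ker ρ_F, i.e., every word in x, y acting trivially in the monodromy of the dessin ℋᵢ also acts trivially in the monodromy of the intermediate dessin ℱ. -/

import Mathlib

open Equiv

/-- σ₀ = (1 2 3 7 8 9)(6 12); the point 12 is represented by `0 : Fin 12`. -/
def σ₀ : Equiv.Perm (Fin 12) := c[1, 2, 3, 7, 8, 9] * c[6, 0]

/-- σ₁ = (1 2 3 7 8 9)(4 10). -/
def σ₁ : Equiv.Perm (Fin 12) := c[1, 2, 3, 7, 8, 9] * c[4, 10]

/-- σ₂ = (1 2 3 7 8 9)(5 11). -/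
def σ₂ : Equiv.Perm (Fin 12) := c[1, 2, 3, 7, 8, 9] * c[5, 11]

/-- τ = (1 4)(2 5)(7 10)(8 11)(3 6 9 12); the point 12 is represented by `0 : Fin 12`. -/
def τ : Equiv.Perm (Fin 12) := c[1, 4] * c[2, 5] * c[7, 10] * c[8, 11] * c[3, 6, 9, 0]

def σ : Fin 3 → Equiv.Perm (Fin 12) := ![σ₀, σ₁, σ₂]

/-- The generator x of the free group F₂. -/
def x : FreeGroup (Fin 2) := FreeGroup.of 0

/-- The generator y of the free group F₂. -/
def y : FreeGroup (Fin 2) := FreeGroup.of 1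

/-- ρᵢ : F₂ → S₁₂ is determined by ρᵢ(x) = σᵢ and ρᵢ(y) = τ. -/
def ρ (i : Fin 3) : FreeGroup (Fin 2) →* Equiv.Perm (Fin 12) := FreeGroup.lift ![σ i, τ]

/-- ρ_F : F₂ → S₆ is determined by ρ_F(x) = (1 2 3) and ρ_F(y) = (1 4)(2 5)(3 6);
the points 1,…,6 are represented by 0,…,5 in `Fin 6`. -/
def ρF : FreeGroup (Fin 2) →* Equiv.Perm (Fin 6) :=
  FreeGroup.lift ![c[0, 1, 2], c[0, 3] * c[1, 4] * c[2, 5]]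

/-- For each i = 0,1,2 one has ker ρᵢ ≤ ker ρ_F. -/
def p : Fin 12 → Fin 6 := ![5, 0, 1, 2, 3, 4, 5, 0, 1, 2, 3, 4]

theorem stmt_8 : ∀ i : Fin 3, (ρ i).ker ≤ ρF.ker := by
  intro i w hw
  have key : ∀ v : FreeGroup (Fin 2), ∀ a, p ((ρ i v) a) = (ρF v) (p a) := by
    intro v
    induction v using FreeGroup.induction_on with
    | C1 => intro a; simp
    | of j =>
      show ∀ a, p ((ρ i (FreeGroup.of j)) a) = (ρF (FreeGroup.of j)) (p a)
      simp only [ρ, ρF, FreeGroup.lift_apply_of]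
      fin_cases j <;> fin_cases i <;> decide
    | inv_of j h =>
      intro a
      have h' : ∀ a, p ((ρ i (FreeGroup.of j)) a) = (ρF (FreeGroup.of j)) (p a) := h
      apply (ρF (FreeGroup.of j)).injective
      show (ρF (FreeGroup.of j)) (p ((ρ i (FreeGroup.of j)⁻¹) a)) =
        (ρF (FreeGroup.of j)) ((ρF (FreeGroup.of j)⁻¹) (p a))
      rw [← h', map_inv, map_inv, Equiv.Perm.inv_def, Equiv.Perm.inv_def, Equiv.apply_symm_apply, Equiv.apply_symm_apply]
    | mul u v hu hv => intro a; simp only [map_mul, Equiv.Perm.mul_apply, hu, hv]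
  have hs : ∀ a : Fin 6, ∃ b : Fin 12, p b = a := by decide
  simp only [MonoidHom.mem_ker] at hw ⊢
  ext a
  obtain ⟨b, hb⟩ := hs a
  have := key w b
  rw [hw] at this
  simp only [Equiv.Perm.coe_one, id_eq] at this ⊢
  rw [← hb, ← this]
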